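/- Under the standing assumptions on (A, B, F), let A₊ ⊆ A be a subalgebra with Δ(A₊) ⊆ A₊ ⊗̄ A₊, and define I := {ℓ ∈ (A*)^B : ℓ(a₊) = 0 for all a₊ ∈ A₊}. Then I is preserved by the action of A₊: for every a ∈ A₊ and ℓ ∈ I, the linear form a • ℓ (defined by (a • ℓ)(a') = ℓ(a·a')) again lies in I. Consequently, whenever I is moreover a two-sided ideal of ((A*)^B, *), the quotient (A*)^B / I inherits an algebra structure and an action of A₊^op satisfying a • (x·y) = Σᵢ (aᵢ⁽¹⁾ • x)·(aᵢ⁽²⁾ • y) for Δ(a) = Σᵢ aᵢ⁽¹⁾ ⊗ aᵢ⁽²⁾, making it an algebra-module over (A₊^op, Δ). -/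

import Mathlib

open TensorProduct

variable (k A : Type*) [CommRing k] [Ring A] [Bialgebra k A]

/-- The submodule `X ⊗̄ Y` of `A ⊗ A` spanned by elementary tensors from `X` and `Y`. -/
def tens2 (X Y : Set A) : Submodule k (A ⊗[k] A) :=
  Submodule.span k {z | ∃ x ∈ X, ∃ y ∈ Y, z = x ⊗ₜ[k] y}

/-- The submodule `X ⊗̄ Y ⊗̄ Z` of `(A ⊗ A) ⊗ A`. -/
def tens3 (X Y Z : Set A) : Submodule k ((A ⊗[k] A) ⊗[k] A) :=
  Submodule.span k {w | ∃ x ∈ X, ∃ y ∈ Y, ∃ z ∈ Z, w = (x ⊗ₜ[k] y) ⊗ₜ[k] z}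

/-- `ℓ ⊗ ℓ'` as a linear form on `A ⊗ A` (composite `A ⊗ A → k ⊗ k ≅ k`). -/
noncomputable def pairForm (ℓ ℓ' : A →ₗ[k] k) : A ⊗[k] A →ₗ[k] k :=
  (TensorProduct.lid k k).toLinearMap ∘ₗ TensorProduct.map ℓ ℓ'

/-- The twisted product `(ℓ * ℓ')(a) = (ℓ ⊗ ℓ')(Δ(a)·F⁻¹)`, where `Finv = F⁻¹`. -/
noncomputable def starProd (Finv : A ⊗[k] A) (ℓ ℓ' : A →ₗ[k] k) : A →ₗ[k] k :=
  pairForm k A ℓ ℓ' ∘ₗ LinearMap.mulRight k Finv ∘ₗ Coalgebra.comul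

/-- `(A*)^B`: the right `B`-invariant linear forms on `A`. -/
def invForms (S : Set A) : Set (A →ₗ[k] k) :=
  {ℓ | ∀ a : A, ∀ b ∈ S, ℓ (a * b) = ℓ a * Coalgebra.counit (R := k) b}

/-- `Δ ⊗ id` as a map `A ⊗ A → (A ⊗ A) ⊗ A`. -/
noncomputable def DeltaId : A ⊗[k] A →ₗ[k] (A ⊗[k] A) ⊗[k] A :=
  TensorProduct.map Coalgebra.comul LinearMap.id

/-- `id ⊗ Δ` as a map `A ⊗ A → (A ⊗ A) ⊗ A` (reassociated). -/
noncomputable def IdDelta : A ⊗[k] A →ₗ[k] (A ⊗[k] A) ⊗[k] A :=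
  (TensorProduct.assoc k A A A).symm.toLinearMap ∘ₗ
    TensorProduct.map LinearMap.id Coalgebra.comul

/-- `1 ⊗ x` as an element of `(A ⊗ A) ⊗ A`, for `x : A ⊗ A`. -/
noncomputable def oneTens (x : A ⊗[k] A) : (A ⊗[k] A) ⊗[k] A :=
  (TensorProduct.assoc k A A A).symm ((1 : A) ⊗ₜ[k] x)

/-- `Φ_B = (F⊗1)·((Δ⊗id)F)·((1⊗F)·((id⊗Δ)F))⁻¹`, written using `F⁻¹ = Finv`. -/
noncomputable def PhiB (F Finv : A ⊗[k] A) : (A ⊗[k] A) ⊗[k] A :=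
  (F ⊗ₜ[k] (1 : A)) * DeltaId k A F * IdDelta k A Finv * oneTens k A Finv

/-- The action `(a • ℓ)(a') = ℓ(a·a')`. -/
noncomputable def act (a : A) (ℓ : A →ₗ[k] k) : A →ₗ[k] k :=
  ℓ ∘ₗ LinearMap.mulLeft k a

lemma pairForm_tmul_mul (a1 a2 : A) (ℓ ℓ' : A →ₗ[k] k) (z : A ⊗[k] A) :
    pairForm k A ℓ ℓ' ((a1 ⊗ₜ[k] a2) * z) =
      pairForm k A (act k A a1 ℓ) (act k A a2 ℓ') z := by
  induction z using TensorProduct.induction_on with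
  | zero => simp
  | tmul u v =>
      simp [pairForm, act, Algebra.TensorProduct.tmul_mul_tmul]
  | add x y hx hy => simp [mul_add, hx, hy]

theorem stmt10 (B Ap : Subalgebra k A) (F Finv : A ⊗[k] A)
    (hinv1 : F * Finv = 1) (hinv2 : Finv * F = 1)
    (hcF1 : TensorProduct.lid k A (TensorProduct.map Coalgebra.counit LinearMap.id F) = 1)
    (hcF2 : TensorProduct.rid k A (TensorProduct.map LinearMap.id Coalgebra.counit F) = 1)
    (hFB : ∀ b ∈ B, F * Coalgebra.comul (R := k) b * Finv ∈ tens2 k A (B : Set A) (B : Set A))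
    (hPhi : PhiB k A F Finv ∈ tens3 k A (B : Set A) (B : Set A) (B : Set A))
    -- `Δ(A₊) ⊆ A₊ ⊗̄ A₊`
    (hAp : ∀ a ∈ Ap, Coalgebra.comul (R := k) a ∈ tens2 k A (Ap : Set A) (Ap : Set A)) :
    -- `I := {ℓ ∈ (A*)^B : ℓ vanishes on A₊}` is preserved by the action of `A₊`:
    (∀ a ∈ Ap, ∀ ℓ ∈ invForms k A (B : Set A), (∀ x ∈ Ap, ℓ x = 0) →
      (act k A a ℓ ∈ invForms k A (B : Set A) ∧ ∀ x ∈ Ap, act k A a ℓ x = 0)) ∧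
    -- consequently, whenever `I` is moreover a two-sided ideal of `((A*)^B, *)`,
    ((∀ ℓ ∈ invForms k A (B : Set A), (∀ x ∈ Ap, ℓ x = 0) →
        ∀ ℓ' ∈ invForms k A (B : Set A),
          (starProd k A Finv ℓ ℓ' ∈ invForms k A (B : Set A) ∧
            (∀ x ∈ Ap, starProd k A Finv ℓ ℓ' x = 0) ∧
            starProd k A Finv ℓ' ℓ ∈ invForms k A (B : Set A) ∧
            (∀ x ∈ Ap, starProd k A Finv ℓ' ℓ x = 0))) →
      -- the induced action on the quotient `(A*)^B / I` satisfies the module-algebra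
      -- identity `a • (x·y) = Σᵢ (aᵢ⁽¹⁾ • x)·(aᵢ⁽²⁾ • y)` (equality modulo `I`, i.e.,
      -- both sides agree after evaluation at every element of `A₊`... indeed the
      -- difference lies in `I`):
      (∀ a ∈ Ap, ∀ ℓ ∈ invForms k A (B : Set A), ∀ ℓ' ∈ invForms k A (B : Set A),
        ∀ (ι : Type) (s : Finset ι) (a1 a2 : ι → A),
          (∀ i ∈ s, a1 i ∈ Ap ∧ a2 i ∈ Ap) →
          Coalgebra.comul (R := k) a = ∑ i ∈ s, a1 i ⊗ₜ[k] a2 i →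
          (act k A a (starProd k A Finv ℓ ℓ') -
              ∑ i ∈ s, starProd k A Finv (act k A (a1 i) ℓ) (act k A (a2 i) ℓ')
            ∈ invForms k A (B : Set A) ∧
          ∀ x ∈ Ap,
            (act k A a (starProd k A Finv ℓ ℓ') -
              ∑ i ∈ s, starProd k A Finv (act k A (a1 i) ℓ) (act k A (a2 i) ℓ')) x = 0))) := by
  constructor
  · intro a ha ℓ hℓ hv
    refine ⟨fun a' b hb => ?_, fun x hx => ?_⟩
    · simp only [act, LinearMap.comp_apply, LinearMap.mulLeft_apply, ← mul_assoc]
      exact hℓ (a * a') b hb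
    · simpa [act] using hv (a * x) (Ap.mul_mem ha hx)
  · intro _ a _ ℓ _ ℓ' _ ι s a1 a2 _ hΔ
    have hD : act k A a (starProd k A Finv ℓ ℓ') =
        ∑ i ∈ s, starProd k A Finv (act k A (a1 i) ℓ) (act k A (a2 i) ℓ') := by
      ext a'
      simp only [act, starProd, LinearMap.comp_apply, LinearMap.mulLeft_apply,
        LinearMap.mulRight_apply, LinearMap.coe_sum, Finset.sum_apply]
      rw [Bialgebra.comul_mul, hΔ, Finset.sum_mul, Finset.sum_mul, map_sum]
      exact Finset.sum_congr rfl fun i _ => by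
        rw [mul_assoc, pairForm_tmul_mul]; rfl
    rw [hD, sub_self]
    exact ⟨fun a' b hb => by simp, fun x _ => rfl⟩
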